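/- arXiv:2007.00367 — 3 statements merged into one kernel-verified Lean document; each statement's English description precedes it below -/
import Mathlib

section
/- Let X be a topological space and let 𝒜 be an arrangement on X satisfying the no-coordinate-axis hypothesis. Let S be a finite set and let * denote an added element. Then for every nonempty A ∈ P_𝒜(S) and every B ∈ P_𝒜(S ⊔ {*}) with A × X ⊆ B, there exists B' ∈ P_𝒜(S) such that B = B' × X. (Equivalently, the image of P_𝒜(S) under multiplication by the bottom element 0̂ ∈ P_𝒜({*}) is an order ideal of P_𝒜(S ⊔ {*}).) -/
open scoped Classical

/-- An arrangement `𝒜` on a topological space `X`: a finite index set `I` and,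
for each `i ∈ I`, a finite set `S i` together with a closed subset `A i ⊆ X^{S i}`. -/
structure Arrangement (X : Type*) [TopologicalSpace X] where
  I : Type*
  [fintypeI : Fintype I]
  S : I → Type*
  [fintypeS : ∀ i, Fintype (S i)]
  A : ∀ i, Set (S i → X)
  closedA : ∀ i, IsClosed (A i)

/-- A generator of `𝒜` on a finite set `T`: a subset of `X^T` of the form
`{f : T → X | f ∘ j ∈ A i}` for some `i` and some injection `j : S i → T`. -/
def IsGenerator {X : Type*} [TopologicalSpace X] (𝒜 : Arrangement X) (T : Type*)
    (G : Set (T → X)) : Prop :=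
  ∃ (i : 𝒜.I) (j : 𝒜.S i → T), Function.Injective j ∧ G = {f : T → X | f ∘ j ∈ 𝒜.A i}

/-- Membership in the poset `P_𝒜(T)`: the subsets of `X^T` that are intersections of
(possibly empty) families of generators of `𝒜` on `T` (the empty intersection is all of `X^T`). -/
def InPoset {X : Type*} [TopologicalSpace X] (𝒜 : Arrangement X) (T : Type*)
    (B : Set (T → X)) : Prop :=
  ∃ 𝒢 : Set (Set (T → X)), (∀ G ∈ 𝒢, IsGenerator 𝒜 T G) ∧ B = ⋂₀ 𝒢

/-- The no-coordinate-axis hypothesis: for every `i`, every `s ∈ S i` and every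
`x̄ : S i → X` there is `y : X` such that changing the value of `x̄` at `s` to `y`
gives a function not in `A i`. -/
def NoAxis {X : Type*} [TopologicalSpace X] (𝒜 : Arrangement X) : Prop :=
  ∀ (i : 𝒜.I) (s : 𝒜.S i) (x : 𝒜.S i → X), ∃ y : X,
    (fun t => if t = s then y else x t) ∉ 𝒜.A i

/-- For `A ⊆ X^S`, the set `A × X ⊆ X^{S ⊔ {*}}`, realizing `S ⊔ {*}` as `Option S`
with `*` the element `none`. -/
def cyl {X S : Type*} (A : Set (S → X)) : Set (Option S → X) :=
  {f | (fun s => f (some s)) ∈ A}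

/-- Under the no-coordinate-axis hypothesis, for every nonempty `A ∈ P_𝒜(S)` and every
`B ∈ P_𝒜(S ⊔ {*})` with `A × X ⊆ B`, there is `B' ∈ P_𝒜(S)` with `B = B' × X`. -/
theorem order_ideal_one_point {X : Type*} [TopologicalSpace X] (𝒜 : Arrangement X)
    (hax : NoAxis 𝒜) (S : Type*) [Fintype S] :
    ∀ A : Set (S → X), InPoset 𝒜 S A → A.Nonempty →
      ∀ B : Set (Option S → X), InPoset 𝒜 (Option S) B → cyl A ⊆ B →
        ∃ B' : Set (S → X), InPoset 𝒜 S B' ∧ B = cyl B' := by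
  intro A hA hAne B hB hsub
  by_cases hX : Nonempty X
  · obtain ⟨x₀⟩ := hX
    obtain ⟨a, ha⟩ := hAne
    obtain ⟨𝒢, h𝒢, hBeq⟩ := hB
    have key : ∀ G ∈ 𝒢, ∃ G' : Set (S → X), IsGenerator 𝒜 S G' ∧ G = cyl G' := by
      intro G hG
      obtain ⟨i, j, hj, hGeq⟩ := h𝒢 G hG
      have hnone : ∀ t, j t ≠ none := by
        intro s₀ hs₀
        set xb : 𝒜.S i → X := (fun o => Option.elim o x₀ a) ∘ j with hxb
        obtain ⟨y, hy⟩ := hax i s₀ xb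
        have hf : (fun o => Option.elim o y a) ∈ cyl A := ha
        have hfG : (fun o => Option.elim o y a) ∈ G := by
          have := hsub hf
          rw [hBeq] at this
          exact this G hG
        rw [hGeq] at hfG
        apply hy
        have : (fun t => if t = s₀ then y else xb t)
            = (fun o => Option.elim o y a) ∘ j := by
          funext t
          by_cases ht : t = s₀
          · subst ht; simp [hs₀]
          · have hjt : j t ≠ none := fun h => ht (hj (h.trans hs₀.symm))
            obtain ⟨s, hs⟩ := Option.ne_none_iff_exists'.mp hjt
            simp [ht, hxb, hs]
        rw [this]
        exact hfG
      set j' : 𝒜.S i → S := fun t => (j t).get (Option.isSome_iff_ne_none.mpr (hnone t))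
        with hj'
      have hsome : ∀ t, j t = some (j' t) := by
        intro t; simp [hj']
      refine ⟨{g : S → X | g ∘ j' ∈ 𝒜.A i}, ⟨i, j', ?_, rfl⟩, ?_⟩
      · intro t₁ t₂ h
        apply hj
        rw [hsome t₁, hsome t₂, h]
      · rw [hGeq]
        ext f
        have : f ∘ j = (fun s => f (some s)) ∘ j' := by
          funext t; simp [hsome t]
        simp only [cyl, Set.mem_setOf_eq, this]
    refine ⟨⋂₀ {G' | IsGenerator 𝒜 S G' ∧ cyl G' ∈ 𝒢}, ⟨_, fun G' hG' => hG'.1, rfl⟩, ?_⟩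
    rw [hBeq]
    ext f
    simp only [cyl, Set.mem_setOf_eq, Set.mem_sInter]
    constructor
    · intro hf G' hG'
      exact hf (cyl G') hG'.2
    · intro hf G hG
      obtain ⟨G', hgen, rfl⟩ := key G hG
      exact hf G' ⟨hgen, hG⟩
  · refine ⟨A, hA, ?_⟩
    have h1 : B = ∅ := Set.eq_empty_of_forall_notMem fun f _ => hX ⟨f none⟩
    have h2 : cyl A = ∅ := Set.eq_empty_of_forall_notMem fun f _ => hX ⟨f none⟩
    rw [h1, h2]
end

section
/- Let X be a topological space and 𝒜 an arrangement on X satisfying the no-coordinate-axis hypothesis, and let S be a finite set with added element *. Then the set {B ∈ P_𝒜(S ⊔ {*}) ∣ there exists a nonempty A ∈ P_𝒜(S) with B = A × X} is a lower set (order ideal) of the poset P_𝒜(S ⊔ {*}) ordered by reverse inclusion: if B ⊇ A × X for some nonempty A ∈ P_𝒜(S) and B ∈ P_𝒜(S ⊔ {*}), then B itself has the form B = B' × X with B' ∈ P_𝒜(S) nonempty. -/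
open scoped Classical

/-- Under the no-coordinate-axis hypothesis, the image of the nonempty part of `P_𝒜(S)`
under multiplication by `0̂ ∈ P_𝒜({*})` is a lower set of `P_𝒜(S ⊔ {*})` for reverse
inclusion: if `B ∈ P_𝒜(S ⊔ {*})` and `B ⊇ A × X` for some nonempty `A ∈ P_𝒜(S)`, then
`B = B' × X` for some nonempty `B' ∈ P_𝒜(S)`. -/
theorem image_isLowerSet {X : Type*} [TopologicalSpace X] (𝒜 : Arrangement X)
    (hax : NoAxis 𝒜) (S : Type*) [Fintype S]
    (B : Set (Option S → X)) (hB : InPoset 𝒜 (Option S) B)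
    (A : Set (S → X)) (hA : InPoset 𝒜 S A) (hAne : A.Nonempty)
    (hsub : cyl A ⊆ B) :
    ∃ B' : Set (S → X), InPoset 𝒜 S B' ∧ B'.Nonempty ∧ B = cyl B' := by
  by_cases hX : Nonempty X
  · obtain ⟨x0⟩ := hX
    obtain ⟨a, ha⟩ := hAne
    obtain ⟨𝒢, h𝒢, rfl⟩ := hB
    -- No generator involves the `none` coordinate.
    have key : ∀ G ∈ 𝒢, ∃ G', IsGenerator 𝒜 S G' ∧ G = cyl G' := by
      intro G hG
      obtain ⟨i, j, hj, rfl⟩ := h𝒢 G hG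
      have hnone : ∀ t, j t ≠ none := by
        intro s0 hs0
        obtain ⟨y, hy⟩ := hax i s0 (fun t => (j t).elim x0 a)
        apply hy
        have hf : (fun o : Option S => o.elim y a) ∈ cyl A := ha
        have h2 : (fun o : Option S => o.elim y a) ∘ j ∈ 𝒜.A i := hsub hf _ hG
        have heq : ((fun o : Option S => o.elim y a) ∘ j)
            = fun t => if t = s0 then y else (j t).elim x0 a := by
          funext t
          by_cases ht : t = s0
          · subst ht; simp [Function.comp, hs0]
          · have hjt : j t ≠ none := by
              intro h; exact ht (hj (h.trans hs0.symm))
            obtain ⟨s, hs⟩ := Option.ne_none_iff_exists'.mp hjt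
            simp [Function.comp, hs, ht]
        rw [← heq]; exact h2
      set j' : 𝒜.S i → S := fun t => (j t).get (Option.ne_none_iff_isSome.mp (hnone t)) with hj'
      have hsj : ∀ t, j t = some (j' t) := fun t => (Option.some_get _).symm
      refine ⟨{g : S → X | g ∘ j' ∈ 𝒜.A i}, ⟨i, j', ?_, rfl⟩, ?_⟩
      · intro t1 t2 h
        apply hj
        rw [hsj t1, hsj t2, h]
      · ext f
        have : f ∘ j = (fun s => f (some s)) ∘ j' := by
          funext t; rw [Function.comp_apply, Function.comp_apply, hsj t]
        simp only [cyl, Set.mem_setOf_eq, this]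
    -- The family of generators on S
    set 𝒢' : Set (Set (S → X)) := {G' | IsGenerator 𝒜 S G' ∧ cyl G' ∈ 𝒢} with h𝒢'
    refine ⟨⋂₀ 𝒢', ⟨𝒢', fun G' hG' => hG'.1, rfl⟩, ⟨a, ?_⟩, ?_⟩
    · intro G' hG'
      have hf : (fun o : Option S => o.elim x0 a) ∈ cyl A := ha
      exact hsub hf _ hG'.2
    · ext f
      constructor
      · intro hf G' hG'
        exact hf _ hG'.2
      · intro hf G hG
        obtain ⟨G', hgen, rfl⟩ := key G hG
        exact hf G' ⟨hgen, hG⟩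
  · -- X is empty: everything is empty.
    have hE : IsEmpty (Option S → X) := ⟨fun f => hX ⟨f none⟩⟩
    refine ⟨A, hA, hAne, ?_⟩
    rw [Set.eq_empty_of_isEmpty B, Set.eq_empty_of_isEmpty (cyl A)]
end

section
/- Let X be a topological space and 𝒜 an arrangement on X satisfying the no-coordinate-axis hypothesis. Let S and T be finite sets. Then for every nonempty A ∈ P_𝒜(S) and every B ∈ P_𝒜(S ⊔ T) with A × X^T ⊆ B, there exists B' ∈ P_𝒜(S) such that B = B' × X^T. (This follows by iterating the one-point case of the order-ideal claim over the elements of T.) -/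
open scoped Classical

/-- For `A ⊆ X^S` and a finite set `T`, the set `A × X^T ⊆ X^{S ⊔ T}`,
realizing the disjoint union `S ⊔ T` as the sum type `S ⊕ T`. -/
def cylSum {X S T : Type*} (A : Set (S → X)) : Set (S ⊕ T → X) :=
  {f | (fun s => f (Sum.inl s)) ∈ A}

/-- Under the no-coordinate-axis hypothesis, for finite sets `S`, `T`, every nonempty
`A ∈ P_𝒜(S)` and every `B ∈ P_𝒜(S ⊔ T)` with `A × X^T ⊆ B`, there is `B' ∈ P_𝒜(S)`
with `B = B' × X^T`. -/
theorem order_ideal_general {X : Type*} [TopologicalSpace X] (𝒜 : Arrangement X)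
    (hax : NoAxis 𝒜) (S T : Type*) [Fintype S] [Fintype T] :
    ∀ A : Set (S → X), InPoset 𝒜 S A → A.Nonempty →
      ∀ B : Set (S ⊕ T → X), InPoset 𝒜 (S ⊕ T) B → cylSum A ⊆ B →
        ∃ B' : Set (S → X), InPoset 𝒜 S B' ∧ B = cylSum B' := by
  intro A hA hAne B hB hsub
  obtain ⟨a, ha⟩ := hAne
  obtain ⟨𝒢, hgen, rfl⟩ := hB
  rcases isEmpty_or_nonempty X with hX | hX
  · have hS : IsEmpty S := ⟨fun s => hX.false (a s)⟩
    have hBu : ⋂₀ 𝒢 = Set.univ := by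
      apply Set.eq_univ_of_univ_subset
      refine subset_trans ?_ hsub
      intro f _
      show (fun s => f (Sum.inl s)) ∈ A
      have : (fun s => f (Sum.inl s)) = a := funext fun s => hS.elim s
      rw [this]; exact ha
    refine ⟨Set.univ, ⟨∅, by simp, by simp⟩, ?_⟩
    rw [hBu]
    ext f; simp [cylSum]
  · obtain ⟨x₀⟩ := hX
    have key : ∀ G ∈ 𝒢, ∃ G', IsGenerator 𝒜 S G' ∧ cylSum G' = G := by
      intro G hG
      obtain ⟨i, j, hj, rfl⟩ := hgen G hG
      have hsubG : cylSum A ⊆ {f | f ∘ j ∈ 𝒜.A i} :=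
        subset_trans hsub (Set.sInter_subset_of_mem hG)
      have hland : ∀ s, ∃ s', j s = Sum.inl s' := by
        intro s
        by_contra hc
        push_neg at hc
        obtain ⟨t, ht⟩ : ∃ t, j s = Sum.inr t := by
          cases hjs : j s with
          | inl s' => exact absurd hjs (hc s')
          | inr t => exact ⟨t, rfl⟩
        have hmem : ∀ h : T → X, Sum.elim a h ∈ cylSum A := fun h => ha
        set f₀ : S ⊕ T → X := Sum.elim a (fun _ => x₀) with hf₀
        obtain ⟨y, hy⟩ := hax i s (f₀ ∘ j)
        have heq : Sum.elim a (Function.update (fun _ => x₀) t y) ∘ j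
            = fun u => if u = s then y else (f₀ ∘ j) u := by
          funext u
          by_cases hu : u = s
          · subst hu
            simp only [Function.comp_apply, ht, if_pos rfl, Sum.elim_inr, Function.update_self, ite_true]
          · simp only [if_neg hu, Function.comp]
            cases hju : j u with
            | inl s' => simp [hf₀, hju]
            | inr t' =>
              have htt : t' ≠ t := by
                intro h
                apply hu
                apply hj
                rw [hju, ht, h]
              simp [hf₀, Function.update, htt, hju]
        have := hsubG (hmem (Function.update (fun _ => x₀) t y))
        rw [Set.mem_setOf_eq, heq] at this
        exact hy this
      choose j' hj' using hland
      refine ⟨{g | g ∘ j' ∈ 𝒜.A i}, ⟨i, j', ?_, rfl⟩, ?_⟩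
      · intro u v huv
        apply hj
        rw [hj' u, hj' v, huv]
      · ext f
        show ((fun s => f (Sum.inl s)) ∘ j' ∈ 𝒜.A i) ↔ (f ∘ j ∈ 𝒜.A i)
        have : (fun s => f (Sum.inl s)) ∘ j' = f ∘ j := by
          funext u
          simp [Function.comp, hj' u]
        rw [this]
    refine ⟨⋂₀ {G' | IsGenerator 𝒜 S G' ∧ cylSum G' ∈ 𝒢}, ⟨_, fun G' h => h.1, rfl⟩, ?_⟩
    ext f
    constructor
    · intro hf
      simp only [cylSum, Set.mem_setOf_eq, Set.mem_sInter]
      rintro G' ⟨-, hG'⟩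
      exact hf _ hG'
    · intro hf G hG
      simp only [cylSum, Set.mem_setOf_eq, Set.mem_sInter] at hf
      obtain ⟨G', hgen', hcG'⟩ := key G hG
      have : (fun s => f (Sum.inl s)) ∈ G' := hf G' ⟨hgen', by show cylSum G' ∈ 𝒢; rw [hcG']; exact hG⟩
      rw [← hcG']
      exact this
end
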